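/- Let ε > 0 and set γ = 1/√(1+ε) and μ₂ = (1/2)√(ε/(1+ε)). Then for any μ₁ ∈ ℝ, every complex root of the quartic z⁴ + 2((1+ε)γμ₂ − μ₁)z³ + ((1+ε)γ² − 4γμ₁μ₂ + 1)z² + 2γ(μ₂ − γμ₁)z + γ² has strictly negative real part if and only if μ₁ < √ε/2. -/

import Mathlib

open Polynomial

private lemma aux_neg (α β g d k : ℝ) (hα : 0 < α) (hg : 0 ≤ g) (hk : 0 < k)
    (h1 : α*g - β*d = -k) (h2 : α*d + β*g = 0) : False := by
  have hkey : α*(g^2+d^2) = -(k*g) := by linear_combination g*h1 + d*h2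
  have hgle : g ≤ 0 := by nlinarith [sq_nonneg g, sq_nonneg d, mul_pos hα hk]
  have hg0 : g = 0 := le_antisymm hgle hg
  rw [hg0] at hkey h1
  have hd2 : d^2 ≤ 0 := by nlinarith
  have hd0 : d = 0 :=
    pow_eq_zero_iff (n := 2) (by norm_num) |>.mp (le_antisymm hd2 (sq_nonneg d))
  rw [hd0] at h1
  simp at h1
  linarith

theorem stmt_5 (ε : ℝ) (hε : 0 < ε)
    (γ μ₂ : ℝ) (hγ : γ = 1/Real.sqrt (1+ε)) (hμ₂ : μ₂ = (1/2) * Real.sqrt (ε/(1+ε)))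
    (μ₁ : ℝ) :
    (∀ z : ℂ, z^4 + ((2*((1+ε)*γ*μ₂ - μ₁) : ℝ) : ℂ)*z^3
        + (((1+ε)*γ^2 - 4*γ*μ₁*μ₂ + 1 : ℝ) : ℂ)*z^2
        + ((2*γ*(μ₂ - γ*μ₁) : ℝ) : ℂ)*z + ((γ^2 : ℝ) : ℂ) = 0 → z.re < 0) ↔
      μ₁ < Real.sqrt ε / 2 := by
  have h1ε : (0:ℝ) < 1 + ε := by linarith
  set e : ℝ := Real.sqrt ε with he
  have he2 : e^2 = ε := Real.sq_sqrt hε.le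
  have he0 : 0 < e := Real.sqrt_pos.mpr hε
  set s : ℝ := Real.sqrt (1+ε) with hsdef
  have hs2 : s^2 = 1+ε := Real.sq_sqrt h1ε.le
  have hs0 : 0 < s := Real.sqrt_pos.mpr h1ε
  have hmulsqrt : Real.sqrt (ε/(1+ε)) * s = e := by
    rw [hsdef, ← Real.sqrt_mul (by positivity) (1+ε)]
    congr 1
    field_simp
  have hγv : γ = 1/s := hγ
  have hμ₂v : μ₂ = e/(2*s) := by
    rw [hμ₂]
    field_simp
    exact hmulsqrt
  -- coefficient identities
  have A3 : 2*((1+ε)*γ*μ₂ - μ₁) = e - 2*μ₁ := by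
    rw [hγv, hμ₂v, show (1:ℝ)+ε = s^2 from hs2.symm]
    field_simp
  have A2 : (1+ε)*γ^2 - 4*γ*μ₁*μ₂ + 1 = 1 + 1/(1+ε) + (e/(1+ε))*(e - 2*μ₁) := by
    rw [hγv, hμ₂v, show (1:ℝ)+ε = s^2 from hs2.symm]
    field_simp
    linear_combination 2*hs2 - 2*he2
  have A1 : 2*γ*(μ₂ - γ*μ₁) = (e - 2*μ₁)/(1+ε) := by
    rw [hγv, hμ₂v, show (1:ℝ)+ε = s^2 from hs2.symm]
    field_simp
  have A0 : γ^2 = 1/(1+ε) := by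
    rw [hγv, show (1:ℝ)+ε = s^2 from hs2.symm]
    field_simp
  -- cast versions of the coefficient identities
  have C3 : ((2*((1+ε)*γ*μ₂ - μ₁) : ℝ) : ℂ) = ((e - 2*μ₁ : ℝ) : ℂ) :=
    Complex.ofReal_inj.mpr A3
  have C2 : (((1+ε)*γ^2 - 4*γ*μ₁*μ₂ + 1 : ℝ) : ℂ)
      = ((1 + 1/(1+ε) + (e/(1+ε))*(e - 2*μ₁) : ℝ) : ℂ) := Complex.ofReal_inj.mpr A2
  have C1 : ((2*γ*(μ₂ - γ*μ₁) : ℝ) : ℂ) = (((e - 2*μ₁)/(1+ε) : ℝ) : ℂ) :=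
    Complex.ofReal_inj.mpr A1
  have C0 : ((γ^2 : ℝ) : ℂ) = ((1/(1+ε) : ℝ) : ℂ) := Complex.ofReal_inj.mpr A0
  have heqn : ∀ z : ℂ,
      (z^4 + ((2*((1+ε)*γ*μ₂ - μ₁) : ℝ) : ℂ)*z^3
        + (((1+ε)*γ^2 - 4*γ*μ₁*μ₂ + 1 : ℝ) : ℂ)*z^2
        + ((2*γ*(μ₂ - γ*μ₁) : ℝ) : ℂ)*z + ((γ^2 : ℝ) : ℂ) = 0)
      ↔ (z^4 + ((e - 2*μ₁ : ℝ) : ℂ)*z^3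
        + ((1 + 1/(1+ε) + (e/(1+ε))*(e - 2*μ₁) : ℝ) : ℂ)*z^2
        + (((e - 2*μ₁)/(1+ε) : ℝ) : ℂ)*z + ((1/(1+ε) : ℝ) : ℂ) = 0) := by
    intro z
    rw [C3, C2, C1, C0]
  constructor
  · -- all roots stable → μ₁ < √ε/2
    intro H
    set Q : Polynomial ℂ := X^4 + Polynomial.C ((e - 2*μ₁ : ℝ) : ℂ) * X^3
      + Polynomial.C ((1 + 1/(1+ε) + (e/(1+ε))*(e - 2*μ₁) : ℝ) : ℂ) * X^2
      + Polynomial.C (((e - 2*μ₁)/(1+ε) : ℝ) : ℂ) * X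
      + Polynomial.C ((1/(1+ε) : ℝ) : ℂ) with hQ
    have hQdeg : Q.natDegree = 4 := by rw [hQ]; compute_degree!
    have hQmonic : Q.Monic := by rw [hQ]; monicity!
    have hQne : Q ≠ 0 := hQmonic.ne_zero
    have hsplits : Q.Splits := IsAlgClosed.splits Q
    have hcard : Q.roots.card = 4 := by
      rw [← hQdeg]; exact (Polynomial.splits_iff_card_roots).mp hsplits
    have hroots_ne : Q.roots ≠ 0 := by
      intro h; rw [h] at hcard; simp at hcard
    have hQeval : ∀ w : ℂ, Q.eval w = w^4 + ((e - 2*μ₁ : ℝ) : ℂ)*w^3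
        + ((1 + 1/(1+ε) + (e/(1+ε))*(e - 2*μ₁) : ℝ) : ℂ)*w^2
        + (((e - 2*μ₁)/(1+ε) : ℝ) : ℂ)*w + ((1/(1+ε) : ℝ) : ℂ) := by
      intro w; simp [hQ]
    have hre : ∀ w ∈ Q.roots, w.re < 0 := by
      intro w hw
      have hw0 : Q.eval w = 0 := (Polynomial.mem_roots'.mp hw).2
      exact H w ((heqn w).mpr (by rw [← hQeval w]; exact hw0))
    have hsum : Q.nextCoeff = -Q.roots.sum :=
      hsplits.nextCoeff_eq_neg_sum_roots_of_monic hQmonic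
    have hnext : Q.nextCoeff = ((e - 2*μ₁ : ℝ) : ℂ) := by
      rw [Polynomial.nextCoeff_of_natDegree_pos (by rw [hQdeg]; norm_num), hQdeg]
      rw [hQ]
      simp only [Polynomial.coeff_add, Polynomial.coeff_C_mul, Polynomial.coeff_X_pow,
        Polynomial.coeff_C, Polynomial.coeff_X]
      norm_num
    have hsumre : Q.roots.sum.re = (Q.roots.map Complex.re).sum := by
      simpa using map_multiset_sum Complex.reAddGroupHom Q.roots
    have hneg : (Q.roots.map Complex.re).sum < 0 := by
      have h := Multiset.sum_lt_sum_of_nonempty (f := Complex.re)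
          (g := fun _ => (0:ℝ)) hroots_ne hre
      simpa using h
    have hpos : 0 < e - 2*μ₁ := by
      have h1 : (e - 2*μ₁ : ℝ) = -Q.roots.sum.re := by
        have := congrArg Complex.re (hnext.symm.trans hsum)
        simpa using this
      rw [h1, hsumre]
      linarith
    linarith
  · -- μ₁ < √ε/2 → all roots stable
    intro hlt z hz
    have hz' := (heqn z).mp hz
    have ht : 0 < e - 2*μ₁ := by linarith
    by_contra hxn
    push_neg at hxn
    have hz0 : z ≠ 0 := by
      rintro rfl
      simp at hz'
      have h := congrArg Complex.re hz'
      simp at h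
      linarith
    have hns : 0 < Complex.normSq z := Complex.normSq_pos.mpr hz0
    set t : ℝ := e - 2*μ₁ with htdef
    set b : ℝ := 1/(1+ε) with hbdef
    set c : ℝ := e/(1+ε) with hcdef
    set A : ℂ := z + ((t : ℝ) : ℂ) + z⁻¹ with hAdef
    set B : ℂ := z + ((b : ℝ) : ℂ) * z⁻¹ with hBdef
    have key : A * B = -((c*t : ℝ) : ℂ) := by
      have h2 : z^2 ≠ 0 := pow_ne_zero 2 hz0
      have expand : (A * B + ((c*t : ℝ) : ℂ)) * z^2
          = z^4 + ((t : ℝ) : ℂ)*z^3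
            + ((1 + b + c*t : ℝ) : ℂ)*z^2 + ((b*t : ℝ) : ℂ)*z + ((b : ℝ) : ℂ) := by
        have hzz : z⁻¹ * z = 1 := inv_mul_cancel₀ hz0
        rw [hAdef, hBdef]
        push_cast
        linear_combination (((b:ℝ):ℂ)*z^2 + ((b:ℝ):ℂ)*((t:ℝ):ℂ)*z + z^2
          + ((b:ℝ):ℂ)*(z⁻¹*z+1)) * hzz
      have hco2 : ((1 + b + c*t : ℝ) : ℂ)
          = ((1 + 1/(1+ε) + (e/(1+ε))*(e - 2*μ₁) : ℝ) : ℂ) := by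
        rw [hbdef, hcdef, htdef]
      have hco1 : ((b*t : ℝ) : ℂ) = (((e - 2*μ₁)/(1+ε) : ℝ) : ℂ) := by
        rw [hbdef, htdef]; push_cast; ring
      have hco0 : ((b : ℝ) : ℂ) = ((1/(1+ε) : ℝ) : ℂ) := by rw [hbdef]
      rw [hco2, hco1, hco0] at expand
      have hzero : (A * B + ((c*t : ℝ) : ℂ)) * z^2 = 0 := by
        rw [expand]; exact hz'
      have h3 : A * B + ((c*t : ℝ) : ℂ) = 0 := by
        rcases mul_eq_zero.mp hzero with h | h
        · exact h
        · exact absurd h h2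
      linear_combination h3
    have hAre : A.re = z.re + t + z.re / Complex.normSq z := by
      simp [hAdef, Complex.add_re, Complex.inv_re]
    have hBre : B.re = z.re + b * (z.re / Complex.normSq z) := by
      simp [hBdef, Complex.add_re, Complex.mul_re, Complex.inv_re, Complex.inv_im]
    have hre' : A.re * B.re - A.im * B.im = -(c*t) := by
      have h := congrArg Complex.re key
      simpa [Complex.mul_re] using h
    have him' : A.re * B.im + A.im * B.re = 0 := by
      have h := congrArg Complex.im key
      simpa [Complex.mul_im] using h
    have hdivnn : 0 ≤ z.re / Complex.normSq z := div_nonneg hxn hns.le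
    have hα : 0 < A.re := by rw [hAre]; linarith
    have hb0 : 0 < b := by rw [hbdef]; positivity
    have hg : 0 ≤ B.re := by
      rw [hBre]
      have : 0 ≤ b * (z.re / Complex.normSq z) := mul_nonneg hb0.le hdivnn
      linarith
    have hct : 0 < c*t := by
      have hc0 : 0 < c := by rw [hcdef]; positivity
      exact mul_pos hc0 ht
    exact aux_neg A.re A.im B.re B.im (c*t) hα hg hct hre' him'
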